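/- Let (G,c) be an edge-colored graph with no rainbow ℓ-cycle, and suppose P is a rainbow path on ℓ−1 vertices from v to y whose edge colors avoid the set C_rep of colors repeating from v into X ⊆ N(v). Then for every x ∈ N(y) ∩ X, at least one of the following holds: (A) x lies on P; (B) c({x,y}) appears on an edge of P; (C) c({v,x}) appears on an edge of P; (D) c({x,y}) = c({v,x}). -/

import Mathlib

open Finset

variable {V : Type*}

/-- Number of distinct colors on edges incident to `v`. -/
noncomputable def colorDeg (G : SimpleGraph V) (c : Sym2 V → ℕ) (v : V) : ℕ :=
  Set.ncard {α : ℕ | ∃ u, G.Adj u v ∧ c s(u, v) = α}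

/-- Number of distinct colors `c({u,v})` over `u ∈ N(v) ∩ U`. -/
noncomputable def colorDegOn (G : SimpleGraph V) (c : Sym2 V → ℕ) (v : V) (U : Set V) : ℕ :=
  Set.ncard {α : ℕ | ∃ u ∈ U, G.Adj u v ∧ c s(u, v) = α}

/-- Minimum color-degree `δ^c(G)`. -/
noncomputable def minColorDeg (G : SimpleGraph V) (c : Sym2 V → ℕ) : ℕ :=
  ⨅ v : V, colorDeg G c v

/-- `(G,c)` is edge-minimal: no proper spanning subgraph has the same minimum color-degree. -/
def EdgeMinimal (G : SimpleGraph V) (c : Sym2 V → ℕ) : Prop :=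
  ∀ H : SimpleGraph V, H ≤ G → H ≠ G → minColorDeg H c ≠ minColorDeg G c

/-- `(G,c)` contains a rainbow cycle on `ℓ` vertices. -/
def HasRainbowCycle (G : SimpleGraph V) (c : Sym2 V → ℕ) (ℓ : ℕ) : Prop :=
  ∃ (u : V) (p : G.Walk u u), p.IsCycle ∧ p.length = ℓ ∧ (p.edges.map c).Nodup

/-- There is a rainbow path from `v` to `y` on `k` vertices whose edge colors avoid `C`. -/
def RainbowPathAvoiding (G : SimpleGraph V) (c : Sym2 V → ℕ) (v y : V) (k : ℕ)
    (C : Set ℕ) : Prop :=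
  ∃ p : G.Walk v y, p.IsPath ∧ p.length + 1 = k ∧ (p.edges.map c).Nodup ∧
    ∀ e ∈ p.edges, c e ∉ C

/-- `σ_{v,X}(y)`: the number of colors `X`-separating `y` from `v`. -/
noncomputable def sepCount (G : SimpleGraph V) (c : Sym2 V → ℕ) (v : V) (X : Set V)
    (y : V) : ℕ :=
  Set.ncard {α : ℕ | ∃ x ∈ X, G.Adj x y ∧ c s(x, y) = α ∧ c s(v, x) ≠ α}

/-- `ρ_{v,X}(y)`: the number of colors restricted for `y` by `(v,X)`. -/
noncomputable def restrCount (G : SimpleGraph V) (c : Sym2 V → ℕ) (v : V) (X : Set V)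
    (y : V) : ℕ :=
  Set.ncard {α : ℕ | (∃ x ∈ X, G.Adj x y ∧ c s(x, y) = α ∧ c s(v, x) ≠ α) ∧
    ∀ w, G.Adj w y → w ∉ X → c s(w, y) ≠ α}

/-- The replication number `R(G,c) = max_{v,α} |N_α(v)|`. -/
noncomputable def repNum (G : SimpleGraph V) (c : Sym2 V → ℕ) : ℕ :=
  ⨆ v : V, ⨆ α : ℕ, Set.ncard {u : V | G.Adj u v ∧ c s(u, v) = α}

/-- `N_!(v)`: neighbors `u` of `v` whose color `c({u,v})` appears on exactly one edge at `v`. -/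
def bangNbhd (G : SimpleGraph V) (c : Sym2 V → ℕ) (v : V) : Set V :=
  {u : V | G.Adj u v ∧ Set.ncard {w : V | G.Adj w v ∧ c s(w, v) = c s(u, v)} = 1}

theorem stmt14 (ℓ : ℕ) (hl : 3 ≤ ℓ) (G : SimpleGraph V) (c : Sym2 V → ℕ)
    (hno : ¬ HasRainbowCycle G c ℓ)
    (v y : V) (X : Set V) (hX : X ⊆ G.neighborSet v)
    (p : G.Walk v y) (hp : p.IsPath) (hlen : p.length + 1 = ℓ - 1)
    (hrb : (p.edges.map c).Nodup)
    (havoid : ∀ e ∈ p.edges, c e ∉ {α : ℕ | 1 < Set.ncard {x ∈ X | c s(v, x) = α}})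
    (x : V) (hxX : x ∈ X) (hxy : G.Adj x y) :
    x ∈ p.support ∨ c s(x, y) ∈ p.edges.map c ∨ c s(v, x) ∈ p.edges.map c ∨
      c s(x, y) = c s(v, x) := by
  by_contra h
  push_neg at h
  obtain ⟨hxs, hcy, hcv, hne⟩ := h
  have hvx : G.Adj v x := hX hxX
  -- the cycle v → x → y → ... → v
  let r : G.Walk x v := SimpleGraph.Walk.cons hxy p.reverse
  have hvx_ne_xy : s(v, x) ≠ s(x, y) := by
    intro he
    exact hne.symm (by rw [he])
  have hxy_np : s(x, y) ∉ p.edges := fun hmem => hcy (List.mem_map_of_mem (f := c) hmem)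
  have hvx_np : s(v, x) ∉ p.edges := fun hmem => hcv (List.mem_map_of_mem (f := c) hmem)
  have hr_path : r.IsPath := by
    apply hp.reverse.cons
    simpa using hxs
  have hr_edges : s(v, x) ∉ r.edges := by
    simp only [r, SimpleGraph.Walk.edges_cons, SimpleGraph.Walk.edges_reverse,
      List.mem_cons, List.mem_reverse]
    push_neg
    exact ⟨hvx_ne_xy, hvx_np⟩
  refine hno ⟨v, SimpleGraph.Walk.cons hvx r, ?_, ?_, ?_⟩
  · rw [SimpleGraph.Walk.cons_isCycle_iff]
    exact ⟨hr_path, hr_edges⟩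
  · simp only [SimpleGraph.Walk.length_cons, r, SimpleGraph.Walk.length_reverse]
    omega
  · simp only [SimpleGraph.Walk.edges_cons, r, SimpleGraph.Walk.edges_reverse,
      List.map_cons, List.map_reverse, List.nodup_cons, List.mem_cons,
      List.mem_reverse, List.nodup_reverse]
    push_neg
    refine ⟨⟨hne.symm, fun hmem => hcv ?_⟩, fun hmem => hcy ?_, hrb⟩
    · exact hmem
    · exact hmem
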